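/- The absorption fraction H(t) converges as t → ∞, with lim_{t→∞} H(t) = H_∞ = w/√(D_σ k_d) − (w γ²/ζ) √(D_σ/k_d) + w γ/ζ. (Core limit computation of Corollary 1.) -/

import Mathlib

open MeasureTheory Filter Topology

noncomputable def erf (x : ℝ) : ℝ := (2 / Real.sqrt Real.pi) * ∫ u in (0:ℝ)..x, Real.exp (-u ^ 2)

noncomputable def erfc (x : ℝ) : ℝ := 1 - erf x

lemma integrable_gauss1 : MeasureTheory.Integrable (fun u : ℝ => Real.exp (-u ^ 2)) := by
  have := integrable_exp_neg_mul_sq (b := 1) one_pos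
  simpa using this

lemma integral_gauss1_Ioi0 : ∫ u in Set.Ioi (0:ℝ), Real.exp (-u ^ 2) = Real.sqrt Real.pi / 2 := by
  have := integral_gaussian_Ioi 1
  simpa using this

lemma tendsto_sqrt_atTop' : Tendsto Real.sqrt atTop atTop := by
  apply tendsto_atTop_atTop.2
  intro b
  refine ⟨b ^ 2, fun a ha => ?_⟩
  calc b ≤ |b| := le_abs_self b
    _ = Real.sqrt (b ^ 2) := (Real.sqrt_sq_eq_abs b).symm
    _ ≤ Real.sqrt a := Real.sqrt_le_sqrt ha

lemma tendsto_erf : Tendsto erf atTop (𝓝 1) := by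
  have h : Tendsto (fun x : ℝ => ∫ u in (0:ℝ)..x, Real.exp (-u ^ 2)) atTop
      (𝓝 (∫ u in Set.Ioi (0:ℝ), Real.exp (-u ^ 2))) :=
    intervalIntegral_tendsto_integral_Ioi 0 integrable_gauss1.integrableOn tendsto_id
  rw [integral_gauss1_Ioi0] at h
  have h2 := h.const_mul (2 / Real.sqrt Real.pi)
  have hpi : Real.sqrt Real.pi ≠ 0 := by
    positivity
  have : 2 / Real.sqrt Real.pi * (Real.sqrt Real.pi / 2) = 1 := by
    field_simp
  rw [this] at h2
  exact h2

lemma erfc_eq (x : ℝ) (hx : 0 ≤ x) :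
    erfc x = (2 / Real.sqrt Real.pi) * ∫ u in Set.Ioi x, Real.exp (-u ^ 2) := by
  have hsplit : (∫ u in Set.Ioi (0:ℝ), Real.exp (-u ^ 2)) =
      (∫ u in Set.Ioc (0:ℝ) x, Real.exp (-u ^ 2)) + ∫ u in Set.Ioi x, Real.exp (-u ^ 2) := by
    rw [← MeasureTheory.setIntegral_union]
    · rw [Set.Ioc_union_Ioi_eq_Ioi hx]
    · exact Set.Ioc_disjoint_Ioi le_rfl
    · exact measurableSet_Ioi
    · exact integrable_gauss1.integrableOn
    · exact integrable_gauss1.integrableOn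
  have hint : (∫ u in (0:ℝ)..x, Real.exp (-u ^ 2)) = ∫ u in Set.Ioc (0:ℝ) x, Real.exp (-u ^ 2) :=
    intervalIntegral.integral_of_le hx
  have hpi : Real.sqrt Real.pi ≠ 0 := by positivity
  have h1 : (1:ℝ) = 2 / Real.sqrt Real.pi * (Real.sqrt Real.pi / 2) := by field_simp
  unfold erfc erf
  rw [hint, h1, ← integral_gauss1_Ioi0, hsplit]
  ring

lemma erfc_nonneg (x : ℝ) (hx : 0 ≤ x) : 0 ≤ erfc x := by
  rw [erfc_eq x hx]
  apply mul_nonneg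
  · positivity
  · exact MeasureTheory.setIntegral_nonneg measurableSet_Ioi fun u _ => (Real.exp_pos _).le

lemma integral_mul_gauss_Ioi (x : ℝ) :
    ∫ u in Set.Ioi x, u * Real.exp (-u ^ 2) = Real.exp (-x ^ 2) / 2 := by
  have hderiv : ∀ u ∈ Set.Ioi x, HasDerivAt (fun u : ℝ => -Real.exp (-u ^ 2) / 2)
      (u * Real.exp (-u ^ 2)) u := by
    intro u _
    have h1 : HasDerivAt (fun u : ℝ => -u ^ 2) (-(2 * u)) u := by
      exact (hasDerivAt_pow 2 u).neg.congr_deriv (by simp)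
    have h2 := (h1.exp).neg.div_const 2
    exact h2.congr_deriv (by ring)
  have hcont : ContinuousOn (fun u : ℝ => -Real.exp (-u ^ 2) / 2) (Set.Ici x) := by
    fun_prop
  have hint : MeasureTheory.IntegrableOn (fun u : ℝ => u * Real.exp (-u ^ 2)) (Set.Ioi x) := by
    have := integrable_mul_exp_neg_mul_sq (b := 1) one_pos
    simpa using this.integrableOn
  have htend : Tendsto (fun u : ℝ => -Real.exp (-u ^ 2) / 2) atTop (𝓝 0) := by
    have h1 : Tendsto (fun u : ℝ => -u ^ 2) atTop atBot := by
      apply tendsto_neg_atBot_iff.2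
      exact tendsto_pow_atTop (by norm_num)
    have := (Real.tendsto_exp_atBot.comp h1).neg.div_const 2
    simpa using this
  have := MeasureTheory.integral_Ioi_of_hasDerivAt_of_tendsto (hcont x Set.self_mem_Ici) hderiv hint htend
  rw [this]
  ring

lemma erfc_le (x : ℝ) (hx : 1 ≤ x) : erfc x ≤ Real.exp (-x ^ 2) := by
  have hx0 : (0:ℝ) ≤ x := le_trans zero_le_one hx
  rw [erfc_eq x hx0]
  have hint : MeasureTheory.IntegrableOn (fun u : ℝ => u * Real.exp (-u ^ 2)) (Set.Ioi x) := by
    have := integrable_mul_exp_neg_mul_sq (b := 1) one_pos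
    simpa using this.integrableOn
  have hmono : (∫ u in Set.Ioi x, Real.exp (-u ^ 2)) ≤ ∫ u in Set.Ioi x, u * Real.exp (-u ^ 2) := by
    apply MeasureTheory.setIntegral_mono_on integrable_gauss1.integrableOn hint measurableSet_Ioi
    intro u hu
    have hu1 : 1 ≤ u := le_trans hx (le_of_lt hu)
    nlinarith [Real.exp_pos (-u ^ 2)]
  rw [integral_mul_gauss_Ioi x] at hmono
  have hpi1 : 1 ≤ Real.sqrt Real.pi := by
    rw [show (1:ℝ) = Real.sqrt 1 by simp]
    exact Real.sqrt_le_sqrt (by linarith [Real.pi_gt_three])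
  calc 2 / Real.sqrt Real.pi * ∫ u in Set.Ioi x, Real.exp (-u ^ 2)
      ≤ 2 / 1 * (Real.exp (-x ^ 2) / 2) := by
        apply mul_le_mul
        · apply div_le_div_of_nonneg_left (by norm_num) one_pos hpi1
        · exact hmono
        · exact MeasureTheory.setIntegral_nonneg measurableSet_Ioi fun u _ => (Real.exp_pos _).le
        · norm_num
    _ = Real.exp (-x ^ 2) := by ring

theorem stmt_8
    (Dσ kd γ w : ℝ) (hDσ : 0 < Dσ) (hkd : 0 < kd) (hγ : 0 < γ)
    (ζ : ℝ) (hζdef : ζ = γ ^ 2 * Dσ - kd) (hζ : ζ ≠ 0)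
    (H : ℝ → ℝ)
    (hH : ∀ t, 0 < t → H t = w / Real.sqrt (kd * Dσ) * erf (Real.sqrt (kd * t)) -
          w * γ / ζ * (Real.exp (ζ * t) * erfc (γ * Real.sqrt (Dσ * t)) +
            γ * Real.sqrt (Dσ / kd) * erf (Real.sqrt (kd * t)) - 1))
    (Hinf : ℝ)
    (hHinf : Hinf = w / Real.sqrt (Dσ * kd) - w * γ ^ 2 / ζ * Real.sqrt (Dσ / kd) + w * γ / ζ)
    :
    Tendsto H atTop (𝓝 Hinf) := by
  -- the sqrt argument tends to infinity
  have hsq : Tendsto (fun t : ℝ => Real.sqrt (kd * t)) atTop atTop :=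
    tendsto_sqrt_atTop'.comp (tendsto_id.const_mul_atTop hkd)
  have herf1 : Tendsto (fun t : ℝ => erf (Real.sqrt (kd * t))) atTop (𝓝 1) :=
    tendsto_erf.comp hsq
  -- the exp * erfc term tends to 0
  have hζle : ζ - γ ^ 2 * Dσ = -kd := by rw [hζdef]; ring
  have hterm : Tendsto (fun t : ℝ => Real.exp (ζ * t) * erfc (γ * Real.sqrt (Dσ * t)))
      atTop (𝓝 0) := by
    have hub : ∀ᶠ t in atTop, Real.exp (ζ * t) * erfc (γ * Real.sqrt (Dσ * t))
        ≤ Real.exp (-kd * t) := by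
      filter_upwards [eventually_ge_atTop (1 / (γ ^ 2 * Dσ)), eventually_ge_atTop (0:ℝ)]
        with t ht ht0
      have hx0 : 0 ≤ γ * Real.sqrt (Dσ * t) := by positivity
      have hx1 : 1 ≤ γ * Real.sqrt (Dσ * t) := by
        have h1 : (1 / (γ ^ 2 * Dσ)) * (γ ^ 2 * Dσ) ≤ t * (γ ^ 2 * Dσ) := by
          apply mul_le_mul_of_nonneg_right ht (by positivity)
        have h2 : (1:ℝ) ≤ γ ^ 2 * (Dσ * t) := by
          rw [one_div, inv_mul_cancel₀ (by positivity : (γ ^ 2 * Dσ) ≠ 0)] at h1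
          nlinarith
        have := Real.sqrt_le_sqrt h2
        rw [Real.sqrt_one, Real.sqrt_mul (by positivity) (Dσ * t),
          Real.sqrt_sq hγ.le] at this
        exact this
      have hx2 : (γ * Real.sqrt (Dσ * t)) ^ 2 = γ ^ 2 * Dσ * t := by
        rw [mul_pow, Real.sq_sqrt (by positivity)]
        ring
      calc Real.exp (ζ * t) * erfc (γ * Real.sqrt (Dσ * t))
          ≤ Real.exp (ζ * t) * Real.exp (-(γ * Real.sqrt (Dσ * t)) ^ 2) :=
            mul_le_mul_of_nonneg_left (erfc_le _ hx1) (Real.exp_pos _).le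
        _ = Real.exp (-kd * t) := by
            rw [← Real.exp_add, hx2]
            congr 1
            nlinarith [hζle]
    have hlb : ∀ᶠ t in atTop, 0 ≤ Real.exp (ζ * t) * erfc (γ * Real.sqrt (Dσ * t)) := by
      filter_upwards [eventually_ge_atTop (0:ℝ)] with t ht
      exact mul_nonneg (Real.exp_pos _).le (erfc_nonneg _ (by positivity))
    have htop : Tendsto (fun t : ℝ => Real.exp (-kd * t)) atTop (𝓝 0) := by
      apply Real.tendsto_exp_atBot.comp
      have h1 : Tendsto (fun t : ℝ => kd * t) atTop atTop := tendsto_id.const_mul_atTop hkd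
      have h2 := tendsto_neg_atTop_atBot.comp h1
      exact h2.congr fun t => by simp [Function.comp]
    exact tendsto_of_tendsto_of_tendsto_of_le_of_le' tendsto_const_nhds htop hlb hub
  -- combine
  have hlim : Tendsto (fun t : ℝ => w / Real.sqrt (kd * Dσ) * erf (Real.sqrt (kd * t)) -
      w * γ / ζ * (Real.exp (ζ * t) * erfc (γ * Real.sqrt (Dσ * t)) +
        γ * Real.sqrt (Dσ / kd) * erf (Real.sqrt (kd * t)) - 1)) atTop
      (𝓝 (w / Real.sqrt (kd * Dσ) * 1 -
        w * γ / ζ * (0 + γ * Real.sqrt (Dσ / kd) * 1 - 1))) := by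
    exact (herf1.const_mul _).sub
      ((((hterm.add ((herf1.const_mul _))).sub_const 1).const_mul _))
  have hval : w / Real.sqrt (kd * Dσ) * 1 -
      w * γ / ζ * (0 + γ * Real.sqrt (Dσ / kd) * 1 - 1) = Hinf := by
    rw [hHinf, mul_comm kd Dσ]
    field_simp
    ring
  rw [hval] at hlim
  apply hlim.congr'
  filter_upwards [eventually_gt_atTop (0:ℝ)] with t ht
  exact (hH t ht).symm
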